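/- arXiv:1403.5153 — 5 statements merged into one kernel-verified Lean document; each statement's English description precedes it below -/
import Mathlib

section
/- Let p be an odd prime and D = ⟨x, y | x^(p^m) = y^(p^n) = 1, y x y⁻¹ = x^(1+p^(m-1))⟩ with m ≥ 2, n ≥ 1. Then the number of conjugacy classes of D equals p^(n+m-1) + p^(n+m-2) - p^(n+m-3). -/
lemma aux_one_add_pow_modEq (M P : ℤ) (hP : M ∣ P * P) :
    ∀ b : ℕ, (1 + P) ^ b ≡ 1 + b * P [ZMOD M] := by
  intro b
  induction b with
  | zero => simp
  | succ b ih =>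
      have h1 : (1 + P) ^ (b + 1) ≡ (1 + (b : ℤ) * P) * (1 + P) [ZMOD M] := by
        rw [pow_succ]
        exact ih.mul_right _
      refine h1.trans ?_
      have hd : M ∣ (1 + ((b : ℕ) + 1 : ℤ) * P) - (1 + (b : ℤ) * P) * (1 + P) := by
        have he : (1 + ((b : ℕ) + 1 : ℤ) * P) - (1 + (b : ℤ) * P) * (1 + P) = (-(b : ℤ)) * (P * P) := by
          ring
        rw [he]
        exact hP.mul_left _
      have := Int.modEq_iff_dvd.mpr hd
      simpa using this

/-- The metacyclic minimal non-abelian group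
`D = ⟨x,y | x^(p^m) = y^(p^n) = 1, yxy⁻¹ = x^(1+p^(m-1))⟩` has exactly
`p^(n+m-1) + p^(n+m-2) - p^(n+m-3)` conjugacy classes. -/
theorem card_conjClasses_of_metacyclic_minimal_nonabelian
    (p m n : ℕ) (hp : p.Prime) (hodd : Odd p)
    (hm : 2 ≤ m) (hn : 1 ≤ n)
    (D : Type) [Group D] [Fintype D] (x y : D)
    (hgen : Subgroup.closure ({x, y} : Set D) = ⊤)
    (hx : orderOf x = p ^ m) (hy : orderOf y = p ^ n)
    (hrel : y * x * y⁻¹ = x ^ (1 + p ^ (m - 1)))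
    (hcard : Fintype.card D = p ^ (m + n)) :
    Nat.card (ConjClasses D) = p ^ (n + m - 1) + p ^ (n + m - 2) - p ^ (n + m - 3) := by
  set s : ℕ := 1 + p ^ (m - 1) with hs
  -- basic relation
  have hxy : y * x = x ^ s * y := by
    rw [← hrel]; group
  have hA1 : ∀ c : ℕ, y * x ^ c = x ^ (c * s) * y := by
    intro c
    induction c with
    | zero => simp
    | succ c ih =>
        rw [pow_succ, ← mul_assoc, ih, mul_assoc, hxy, ← mul_assoc, ← pow_add]
        ring_nf
  have hA : ∀ (b c : ℕ), y ^ b * x ^ c = x ^ (c * s ^ b) * y ^ b := by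
    intro b
    induction b with
    | zero => simp
    | succ b ih =>
        intro c
        rw [pow_succ, mul_assoc, hA1 c, ← mul_assoc, ih, mul_assoc, ← pow_succ,
          show c * s * s ^ b = c * s ^ (b + 1) by rw [pow_succ]; ring]
  -- every element has the form x^a * y^b
  have htop : ∀ g : D, ∃ a b : ℕ, g = x ^ a * y ^ b := by
    have hxinv : x⁻¹ = x ^ (p ^ m - 1) := by
      apply inv_eq_of_mul_eq_one_right
      rw [← pow_succ']
      have h1 : p ^ m - 1 + 1 = p ^ m := by
        have := Nat.one_le_pow m p hp.pos
        omega
      rw [Nat.sub_add_cancel (Nat.one_le_pow m p hp.pos)] at *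
      rw [← hx, pow_orderOf_eq_one]
    have hyinv : y⁻¹ = y ^ (p ^ n - 1) := by
      apply inv_eq_of_mul_eq_one_right
      rw [← pow_succ']
      have h1 : p ^ n - 1 + 1 = p ^ n := by
        have := Nat.one_le_pow n p hp.pos
        omega
      rw [Nat.sub_add_cancel (Nat.one_le_pow n p hp.pos)] at *
      rw [← hy, pow_orderOf_eq_one]
    let S : Subgroup D :=
      { carrier := {g | ∃ a b : ℕ, g = x ^ a * y ^ b}
        one_mem' := ⟨0, 0, by simp⟩
        mul_mem' := by
          rintro g h ⟨a, b, rfl⟩ ⟨c, d, rfl⟩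
          exact ⟨a + c * s ^ b, b + d, by
            rw [mul_assoc, ← mul_assoc (y ^ b), hA b c, pow_add, pow_add]
            group⟩
        inv_mem' := by
          rintro g ⟨a, b, rfl⟩
          refine ⟨(p ^ m - 1) * a * s ^ ((p ^ n - 1) * b), (p ^ n - 1) * b, ?_⟩
          rw [← hA, mul_inv_rev, ← inv_pow, ← inv_pow, hxinv, hyinv, ← pow_mul, ← pow_mul] }
    intro g
    have : g ∈ S := by
      have hle : Subgroup.closure ({x, y} : Set D) ≤ S := by
        rw [Subgroup.closure_le]
        rintro g (rfl | rfl)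
        · exact ⟨1, 0, by simp⟩
        · exact ⟨0, 1, by simp⟩
      rw [hgen] at hle
      exact hle (Subgroup.mem_top g)
    exact this
  -- bounded representation
  have hrep : ∀ g : D, ∃ a b : ℕ, a < p ^ m ∧ b < p ^ n ∧ g = x ^ a * y ^ b := by
    intro g
    obtain ⟨a, b, rfl⟩ := htop g
    refine ⟨a % p ^ m, b % p ^ n, ?_, ?_, ?_⟩
    · exact Nat.mod_lt _ (pow_pos hp.pos m)
    · exact Nat.mod_lt _ (pow_pos hp.pos n)
    · rw [← hx, ← hy, pow_mod_orderOf, pow_mod_orderOf]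

  -- the central element z
  set z : D := x ^ (p ^ (m - 1)) with hzdef
  have hordz : orderOf z = p := by
    rw [hzdef, orderOf_pow, hx, Nat.gcd_eq_right (pow_dvd_pow p (by omega : m - 1 ≤ m)),
      Nat.pow_div (by omega : m - 1 ≤ m) hp.pos, show m - (m - 1) = 1 by omega, pow_one]
  have hPP : ((p : ℤ)) ^ m ∣ ((p : ℤ) ^ (m - 1)) * ((p : ℤ) ^ (m - 1)) := by
    rw [← pow_add]
    exact pow_dvd_pow _ (by omega)
  have hS : ∀ b : ℕ, ((s : ℤ)) ^ b ≡ 1 + (b : ℤ) * (p : ℤ) ^ (m - 1) [ZMOD (p : ℤ) ^ m] := by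
    intro b
    have : ((s : ℤ)) = 1 + (p : ℤ) ^ (m - 1) := by rw [hs]; push_cast; ring
    rw [this]
    exact aux_one_add_pow_modEq _ _ hPP b
  have hxmod : ∀ A B : ℤ, A ≡ B [ZMOD (p : ℤ) ^ m] → x ^ A = x ^ B := by
    intro A B h
    have hc : ((p ^ m : ℕ) : ℤ) = (p : ℤ) ^ m := by push_cast; ring
    rw [zpow_eq_zpow_iff_modEq, hx, hc]
    exact h
  have hzmod : ∀ A B : ℤ, A ≡ B [ZMOD (p : ℤ)] → z ^ A = z ^ B := by
    intro A B h
    rw [zpow_eq_zpow_iff_modEq, hordz]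
    exact h
  -- the commutator formula
  have hmulform : ∀ a b c d : ℕ,
      (x ^ a * y ^ b) * (x ^ c * y ^ d) = x ^ (a + c * s ^ b) * y ^ (b + d) := by
    intro a b c d
    rw [mul_assoc, ← mul_assoc (y ^ b), hA, pow_add, pow_add]
    group
  have hcomm : ∀ a b c d : ℕ,
      (x ^ a * y ^ b) * (x ^ c * y ^ d) * (x ^ a * y ^ b)⁻¹ =
        z ^ ((b : ℤ) * c - (a : ℤ) * d) * (x ^ c * y ^ d) := by
    intro a b c d
    rw [mul_inv_eq_iff_eq_mul, hmulform, mul_assoc, hmulform,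
      show d + b = b + d from add_comm d b, ← mul_assoc]
    have key : x ^ ((a + c * s ^ b : ℕ)) =
        z ^ ((b : ℤ) * c - (a : ℤ) * d) * x ^ ((c + a * s ^ d : ℕ)) := by
      rw [hzdef, ← zpow_natCast x (p ^ (m - 1)), ← zpow_mul,
        ← zpow_natCast x (a + c * s ^ b), ← zpow_natCast x (c + a * s ^ d), ← zpow_add]
      apply hxmod
      set P : ℤ := (p : ℤ) ^ (m - 1) with hP
      have h1 : ((a + c * s ^ b : ℕ) : ℤ) ≡ (a : ℤ) + c * (1 + b * P) [ZMOD (p : ℤ) ^ m] := by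
        push_cast
        exact ((hS b).mul_left _).add_left _
      have h2 : (((p : ℕ) ^ (m - 1) : ℕ) : ℤ) * ((b : ℤ) * c - (a : ℤ) * d)
            + ((c + a * s ^ d : ℕ) : ℤ)
          ≡ P * ((b : ℤ) * c - (a : ℤ) * d) + ((c : ℤ) + a * (1 + d * P))
            [ZMOD (p : ℤ) ^ m] := by
        push_cast
        exact (((hS d).mul_left _).add_left _).add_left _
      refine h1.trans (Int.ModEq.trans ?_ h2.symm)
      have : (a : ℤ) + c * (1 + b * P) =
          P * ((b : ℤ) * c - (a : ℤ) * d) + ((c : ℤ) + a * (1 + d * P)) := by ring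
      rw [this]
    rw [key, mul_assoc]

  -- uniqueness of bounded representation
  have hbij : Function.Bijective
      (fun ab : Fin (p ^ m) × Fin (p ^ n) => x ^ (ab.1 : ℕ) * y ^ (ab.2 : ℕ)) := by
    rw [Fintype.bijective_iff_surjective_and_card]
    constructor
    · intro g
      obtain ⟨a, b, ha, hb, rfl⟩ := hrep g
      exact ⟨(⟨a, ha⟩, ⟨b, hb⟩), rfl⟩
    · simp [hcard, pow_add]
  have hinj : ∀ a b a' b' : ℕ, a < p ^ m → b < p ^ n → a' < p ^ m → b' < p ^ n →
      x ^ a * y ^ b = x ^ a' * y ^ b' → a = a' ∧ b = b' := by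
    intro a b a' b' ha hb ha' hb' h
    have := hbij.1 (a₁ := (⟨a, ha⟩, ⟨b, hb⟩)) (a₂ := (⟨a', ha'⟩, ⟨b', hb'⟩)) h
    rw [Prod.ext_iff, Fin.ext_iff, Fin.ext_iff] at this
    exact this
  -- conjugation by the generators
  have hconjx : ∀ c d : ℕ, x * (x ^ c * y ^ d) * x⁻¹ = z ^ (-(d : ℤ)) * (x ^ c * y ^ d) := by
    intro c d
    have h := hcomm 1 0 c d
    simpa using h
  have hconjy : ∀ c d : ℕ, y * (x ^ c * y ^ d) * y⁻¹ = z ^ ((c : ℤ)) * (x ^ c * y ^ d) := by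
    intro c d
    have h := hcomm 0 1 c d
    simpa using h
  have hzone : ∀ k : ℤ, z ^ k = 1 ↔ (p : ℤ) ∣ k := by
    intro k
    rw [← orderOf_dvd_iff_zpow_eq_one, hordz]
  -- characterization of the center
  have hcent : ∀ c d : ℕ, (x ^ c * y ^ d ∈ Subgroup.center D) ↔ p ∣ c ∧ p ∣ d := by
    intro c d
    constructor
    · intro hmem
      have hcom := Subgroup.mem_center_iff.mp hmem
      constructor
      · have h1 : y * (x ^ c * y ^ d) * y⁻¹ = x ^ c * y ^ d := by
          rw [hcom y]; group
        rw [hconjy] at h1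
        have h2 : z ^ ((c : ℤ)) = 1 := by
          have h3 : z ^ ((c : ℤ)) * (x ^ c * y ^ d) = 1 * (x ^ c * y ^ d) := by
            rw [one_mul]; exact h1
          exact mul_right_cancel h3
        have := (hzone _).mp h2
        exact_mod_cast this
      · have h1 : x * (x ^ c * y ^ d) * x⁻¹ = x ^ c * y ^ d := by
          rw [hcom x]; group
        rw [hconjx] at h1
        have h2 : z ^ (-(d : ℤ)) = 1 := by
          have h3 : z ^ (-(d : ℤ)) * (x ^ c * y ^ d) = 1 * (x ^ c * y ^ d) := by
            rw [one_mul]; exact h1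
          exact mul_right_cancel h3
        have := (hzone _).mp h2
        rw [Int.dvd_neg] at this
        exact_mod_cast this
    · rintro ⟨hc, hd⟩
      rw [Subgroup.mem_center_iff]
      intro g
      obtain ⟨a, b, rfl⟩ := htop g
      have h1 := hcomm a b c d
      have h2 : z ^ ((b : ℤ) * c - (a : ℤ) * d) = 1 := by
        rw [hzone]
        obtain ⟨c', rfl⟩ := hc
        obtain ⟨d', rfl⟩ := hd
        push_cast
        exact ⟨(b : ℤ) * c' - (a : ℤ) * d', by ring⟩
      rw [h2, one_mul, mul_inv_eq_iff_eq_mul] at h1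
      exact h1
  -- cardinality of the center
  have hZcard : Nat.card (Subgroup.center D) = p ^ (m - 1) * p ^ (n - 1) := by
    have hltm : ∀ k : ℕ, k < p ^ (m - 1) → p * k < p ^ m := by
      intro k hk
      calc p * k < p * p ^ (m - 1) := (Nat.mul_lt_mul_left hp.pos).mpr hk
        _ = p ^ m := by rw [← pow_succ']; congr 1; omega
    have hltn : ∀ k : ℕ, k < p ^ (n - 1) → p * k < p ^ n := by
      intro k hk
      calc p * k < p * p ^ (n - 1) := (Nat.mul_lt_mul_left hp.pos).mpr hk
        _ = p ^ n := by rw [← pow_succ']; congr 1; omega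
    have hfbij : Function.Bijective (fun cd : Fin (p ^ (m - 1)) × Fin (p ^ (n - 1)) =>
        (⟨x ^ (p * (cd.1 : ℕ)) * y ^ (p * (cd.2 : ℕ)),
          (hcent _ _).mpr ⟨⟨_, rfl⟩, ⟨_, rfl⟩⟩⟩ : Subgroup.center D)) := by
      constructor
      · rintro ⟨u1, u2⟩ ⟨v1, v2⟩ h
        simp only [Subtype.mk.injEq] at h
        obtain ⟨h1, h2⟩ := hinj _ _ _ _ (hltm _ u1.2) (hltn _ u2.2) (hltm _ v1.2) (hltn _ v2.2) h
        have e1 : (u1 : ℕ) = v1 := Nat.eq_of_mul_eq_mul_left hp.pos h1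
        have e2 : (u2 : ℕ) = v2 := Nat.eq_of_mul_eq_mul_left hp.pos h2
        simp [Prod.ext_iff, Fin.ext_iff, e1, e2]
      · rintro ⟨g, hg⟩
        obtain ⟨a, b, ha, hb, rfl⟩ := hrep g
        obtain ⟨hc, hd⟩ := (hcent a b).mp hg
        obtain ⟨a', rfl⟩ := hc
        obtain ⟨b', rfl⟩ := hd
        have ha' : a' < p ^ (m - 1) := by
          by_contra hcon
          push_neg at hcon
          have : p * p ^ (m - 1) ≤ p * a' := Nat.mul_le_mul_left p hcon
          rw [← pow_succ', show m - 1 + 1 = m by omega] at this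
          omega
        have hb' : b' < p ^ (n - 1) := by
          by_contra hcon
          push_neg at hcon
          have : p * p ^ (n - 1) ≤ p * b' := Nat.mul_le_mul_left p hcon
          rw [← pow_succ', show n - 1 + 1 = n by omega] at this
          omega
        exact ⟨(⟨a', ha'⟩, ⟨b', hb'⟩), rfl⟩
    have := Nat.card_eq_of_bijective _ hfbij
    rw [← this]
    simp

  haveI : Fact p.Prime := ⟨hp⟩
  -- every value z^i * h is a conjugate of a noncentral h
  have hreach : ∀ c d : ℕ, ¬(p ∣ c ∧ p ∣ d) → ∀ i : ℤ,
      ∃ g : D, g * (x ^ c * y ^ d) * g⁻¹ = z ^ i * (x ^ c * y ^ d) := by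
    intro c d hnc i
    by_cases hc : p ∣ c
    · have hd : ¬ p ∣ d := fun h => hnc ⟨hc, h⟩
      have hd0 : (d : ZMod p) ≠ 0 := fun h => hd ((ZMod.natCast_eq_zero_iff d p).mp h)
      set a : ℕ := ((-(i : ZMod p)) * (d : ZMod p)⁻¹).val with haa
      have hacast : (a : ZMod p) = (-(i : ZMod p)) * (d : ZMod p)⁻¹ := by
        rw [haa, ZMod.natCast_val, ZMod.cast_id]
      refine ⟨x ^ a * y ^ 0, ?_⟩
      rw [hcomm a 0 c d]
      congr 1
      apply hzmod
      rw [Int.modEq_iff_dvd, ← ZMod.intCast_zmod_eq_zero_iff_dvd]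
      push_cast
      rw [hacast]
      field_simp
      ring
    · have hc0 : (c : ZMod p) ≠ 0 := fun h => hc ((ZMod.natCast_eq_zero_iff c p).mp h)
      set b : ℕ := ((i : ZMod p) * (c : ZMod p)⁻¹).val with hbb
      have hbcast : (b : ZMod p) = (i : ZMod p) * (c : ZMod p)⁻¹ := by
        rw [hbb, ZMod.natCast_val, ZMod.cast_id]
      refine ⟨x ^ 0 * y ^ b, ?_⟩
      rw [hcomm 0 b c d]
      congr 1
      apply hzmod
      rw [Int.modEq_iff_dvd, ← ZMod.intCast_zmod_eq_zero_iff_dvd]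
      push_cast
      rw [hbcast]
      field_simp
      ring
  -- noncentral conjugacy classes have exactly p elements
  have hclasscard : ∀ c d : ℕ, ¬(p ∣ c ∧ p ∣ d) →
      Nat.card ((ConjClasses.mk (x ^ c * y ^ d) : ConjClasses D).carrier) = p := by
    intro c d hnc
    have hmem : ∀ i : ℕ, z ^ (i : ℤ) * (x ^ c * y ^ d)
        ∈ (ConjClasses.mk (x ^ c * y ^ d) : ConjClasses D).carrier := by
      intro i
      rw [ConjClasses.mem_carrier_iff_mk_eq, ConjClasses.mk_eq_mk_iff_isConj]
      obtain ⟨g, hg⟩ := hreach c d hnc (i : ℤ)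
      exact (isConj_iff.mpr ⟨g, hg⟩).symm
    have hfbij : Function.Bijective (fun i : Fin p =>
        (⟨z ^ ((i : ℕ) : ℤ) * (x ^ c * y ^ d), hmem i⟩ :
          (ConjClasses.mk (x ^ c * y ^ d) : ConjClasses D).carrier)) := by
      constructor
      · intro i j hij
        simp only [Subtype.mk.injEq, mul_left_inj] at hij
        have := (zpow_eq_zpow_iff_modEq.mp hij)
        rw [hordz] at this
        have h1 : ((i : ℕ) : ℤ) % p = ((j : ℕ) : ℤ) % p := this
        rw [Int.emod_eq_of_lt (by positivity) (by exact_mod_cast i.2),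
          Int.emod_eq_of_lt (by positivity) (by exact_mod_cast j.2)] at h1
        exact Fin.ext (by exact_mod_cast h1)
      · rintro ⟨k, hk⟩
        rw [ConjClasses.mem_carrier_iff_mk_eq, ConjClasses.mk_eq_mk_iff_isConj] at hk
        obtain ⟨g, hg⟩ := isConj_iff.mp hk.symm
        obtain ⟨a, b, rfl⟩ := htop g
        rw [hcomm a b c d] at hg
        set E : ℤ := (b : ℤ) * c - (a : ℤ) * d with hE
        have hp0 : (0 : ℤ) < (p : ℤ) := by exact_mod_cast hp.pos
        have hilt : (E % p).toNat < p := by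
          have h1 : E % p < p := Int.emod_lt_of_pos E hp0
          have h2 : 0 ≤ E % p := Int.emod_nonneg E hp0.ne'
          omega
        refine ⟨⟨(E % p).toNat, hilt⟩, ?_⟩
        have hcast : (((E % p).toNat : ℕ) : ℤ) = E % p :=
          Int.toNat_of_nonneg (Int.emod_nonneg E hp0.ne')
        have hzz : z ^ ((((E % p).toNat : ℕ)) : ℤ) = z ^ E := by
          rw [hcast]
          exact hzmod _ _ (Int.emod_emod_of_dvd E dvd_rfl)
        simp only [Subtype.mk.injEq]
        rw [hzz, hg]
    have := Nat.card_eq_of_bijective _ hfbij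
    rw [← this]
    simp
  -- every noncentral class has p elements
  have hnonc : ∀ ξ : ConjClasses D, ξ ∈ ConjClasses.noncenter D →
      Nat.card ξ.carrier = p := by
    intro ξ hξ
    obtain ⟨g, rfl⟩ := ConjClasses.mk_surjective ξ
    obtain ⟨a, b, ha, hb, rfl⟩ := hrep g
    by_cases hcen : x ^ a * y ^ b ∈ Subgroup.center D
    · exact absurd hξ ((ConjClasses.mk_bijOn D).mapsTo hcen)
    · exact hclasscard a b (fun hdvd => hcen ((hcent a b).mpr hdvd))
  -- final counting via the class equation
  classical
  have hclasseq := Group.nat_card_center_add_sum_card_noncenter_eq_card D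
  have hfin : (ConjClasses.noncenter D).Finite := Set.toFinite _
  have hsum : ∑ᶠ ξ ∈ ConjClasses.noncenter D, Nat.card ξ.carrier
      = p * (ConjClasses.noncenter D).ncard := by
    rw [finsum_mem_eq_finite_toFinset_sum _ hfin,
      Finset.sum_congr rfl (fun ξ hξ => hnonc ξ (hfin.mem_toFinset.mp hξ)),
      Finset.sum_const, smul_eq_mul, mul_comm]
    congr 1
    rw [Set.ncard_eq_toFinset_card _ hfin]
  have hsplit : (ConjClasses.noncenter D).ncard + (ConjClasses.noncenter D)ᶜ.ncard
      = Nat.card (ConjClasses D) := Set.ncard_add_ncard_compl _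
  have hcompl : (ConjClasses.noncenter D)ᶜ.ncard = Nat.card (Subgroup.center D) := by
    rw [← Nat.card_coe_set_eq]
    exact (Nat.card_congr (Set.BijOn.equiv _ (ConjClasses.mk_bijOn D))).symm
  have hDcard : Nat.card D = p ^ (m + n) := by rw [Nat.card_eq_fintype_card, hcard]
  have hZc : Nat.card (Subgroup.center D) = p ^ (m + n - 2) := by
    rw [hZcard, ← pow_add]
    congr 1
    omega
  set t := (ConjClasses.noncenter D).ncard with ht
  have heq : p ^ (m + n - 2) + p * t = p ^ (m + n) := by
    rw [← hZc, ← hsum, hclasseq, hDcard]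
  have htt : t = p ^ (m + n - 1) - p ^ (m + n - 3) := by
    have h1 : p * t = p * (p ^ (m + n - 1) - p ^ (m + n - 3)) := by
      rw [Nat.mul_sub, ← pow_succ', ← pow_succ',
        show m + n - 1 + 1 = m + n by omega, show m + n - 3 + 1 = m + n - 2 by omega]
      set u := p * t with hu
      omega
    exact Nat.eq_of_mul_eq_mul_left hp.pos h1
  rw [← hsplit, hcompl, hZc, htt,
    show n + m - 1 = m + n - 1 by omega, show n + m - 2 = m + n - 2 by omega,
    show n + m - 3 = m + n - 3 by omega]
  have hle : p ^ (m + n - 3) ≤ p ^ (m + n - 1) :=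
    Nat.pow_le_pow_right hp.pos (by omega)
  omega
end

section
/- Let p be an odd prime and D = ⟨x, y | x^(p^m) = y^(p^n) = 1, y x y⁻¹ = x^(1+p^(m-1))⟩ with m ≥ 2, n ≥ 1. Then D is minimal non-abelian: D is non-abelian but every proper subgroup of D is abelian. -/
/-- If `g` has order `p^s` and `p ∤ u`, then `g` is a power of `g^u`. -/
lemma aux_pow_gen {G : Type} [Group G] (p s : ℕ) (hp : p.Prime) (g : G)
    (hg : orderOf g = p ^ s) (u : ℤ) (hu : ¬ (p : ℤ) ∣ u) :
    ∃ c : ℤ, (g ^ u) ^ c = g := by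
  have hpZ : Prime (p : ℤ) := Nat.prime_iff_prime_int.mp hp
  have hco : IsCoprime (p : ℤ) u := (Prime.coprime_iff_not_dvd hpZ).2 hu
  have hco2 : IsCoprime u ((p : ℤ) ^ s) := (hco.symm).pow_right
  obtain ⟨a, b, hab⟩ := hco2
  refine ⟨a, ?_⟩
  have hgp : g ^ ((p : ℤ) ^ s) = 1 := by
    have h0 : g ^ (p ^ s) = 1 := by rw [← hg]; exact pow_orderOf_eq_one g
    rw [show ((p : ℤ) ^ s) = ((p ^ s : ℕ) : ℤ) by push_cast; ring, zpow_natCast, h0]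
  have h1 : (g ^ u) ^ a = g ^ (u * a) := (zpow_mul g u a).symm
  have h2 : (u * a : ℤ) = 1 - (p : ℤ) ^ s * b := by linarith [hab]
  rw [h1, h2, zpow_sub, zpow_one, zpow_mul, hgp, one_zpow]; group

/-- The metacyclic group
`D = ⟨x,y | x^(p^m) = y^(p^n) = 1, yxy⁻¹ = x^(1+p^(m-1))⟩` is minimal non-abelian:
it is non-abelian, but every proper subgroup is abelian. -/
theorem metacyclic_minimal_nonabelian
    (p m n : ℕ) (hp : p.Prime) (hodd : Odd p)
    (hm : 2 ≤ m) (hn : 1 ≤ n)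
    (D : Type) [Group D] [Fintype D] (x y : D)
    (hgen : Subgroup.closure ({x, y} : Set D) = ⊤)
    (hx : orderOf x = p ^ m) (hy : orderOf y = p ^ n)
    (hrel : y * x * y⁻¹ = x ^ (1 + p ^ (m - 1)))
    (hcard : Fintype.card D = p ^ (m + n)) :
    (¬ ∀ a b : D, Commute a b) ∧
    (∀ H : Subgroup D, H ≠ ⊤ → ∀ a ∈ H, ∀ b ∈ H, Commute a b) := by
  set t : ℕ := p ^ (m - 1) with ht
  set z : D := x ^ t with hzdef
  have hp1 : 1 < p := hp.one_lt
  -- x^(p^m) = 1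
  have hxpm : x ^ (p ^ m) = 1 := by rw [← hx]; exact pow_orderOf_eq_one x
  -- z^p = 1
  have hzp : z ^ p = 1 := by
    rw [hzdef, ← pow_mul, show t * p = p ^ m by
      rw [ht, ← pow_succ]; congr 1; omega, hxpm]
  -- x^t ≠ 1 i.e. z ≠ 1
  have hzne : z ≠ 1 := by
    intro h
    have := orderOf_dvd_of_pow_eq_one h
    rw [hx, ht] at this
    have hle := Nat.le_of_dvd (Nat.pow_pos (by omega)) this
    have hlt : p ^ (m - 1) < p ^ m := Nat.pow_lt_pow_right hp1 (by omega)
    omega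
  -- basic relation : y x y⁻¹ = x * z
  have hyxy : y * x * y⁻¹ = x * z := by rw [hrel, pow_add, pow_one, hzdef]
  -- y z y⁻¹ = z
  have hyzy : y * z * y⁻¹ = z := by
    have h1 : y * z * y⁻¹ = (y * x * y⁻¹) ^ t := by
      rw [hzdef]; simp [conj_pow]
    rw [h1, hyxy, ((Commute.refl x).pow_right t).mul_pow, ← hzdef]
    have h2 : z ^ t = 1 := by
      rw [hzdef, ← pow_mul, ht, ← pow_add,
        show (m - 1) + (m - 1) = m + (m - 2) by omega, pow_add, pow_mul, hxpm, one_pow]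
    rw [h2, mul_one, hzdef]
  -- z is central
  have hzc : ∀ g : D, Commute g z := by
    have hxmem : x ∈ Subgroup.centralizer {z} := by
      rw [Subgroup.mem_centralizer_iff]
      intro h hh; rw [Set.mem_singleton_iff] at hh; subst hh
      rw [hzdef]; exact (Commute.pow_left (Commute.refl x) t).eq
    have hymem : y ∈ Subgroup.centralizer {z} := by
      rw [Subgroup.mem_centralizer_iff]
      intro h hh; rw [Set.mem_singleton_iff] at hh; subst hh
      have := hyzy
      calc z * y = (y * z * y⁻¹) * y := by rw [hyzy]
        _ = y * z := by group
    have hle : Subgroup.closure ({x, y} : Set D) ≤ Subgroup.centralizer {z} := by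
      rw [Subgroup.closure_le]
      intro g hg
      rcases hg with h | h
      · simpa [h] using hxmem
      · simp at h; simpa [h] using hymem
    rw [hgen] at hle
    intro g
    have hg : g ∈ Subgroup.centralizer {z} := hle (Subgroup.mem_top g)
    rw [Subgroup.mem_centralizer_iff] at hg
    exact (hg z rfl).symm
  -- conjugation of powers of x by y
  have conj1 : ∀ k : ℤ, y * x ^ k * y⁻¹ = x ^ k * z ^ k := by
    intro k
    have h1 : y * x ^ k * y⁻¹ = (y * x * y⁻¹) ^ k := by simp [conj_zpow]
    rw [h1, hyxy, (hzc x).mul_zpow]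
  have conj1' : ∀ k : ℤ, y⁻¹ * x ^ k * y = x ^ k * z ^ (-k) := by
    intro k
    have h1 : x ^ k = y⁻¹ * (y * x ^ k * y⁻¹) * y := by group
    rw [conj1 k] at h1
    have h2 : y⁻¹ * (x ^ k * z ^ k) * y = (y⁻¹ * x ^ k * y) * (y⁻¹ * z ^ k * y) := by group
    rw [h2] at h1
    have h3 : y⁻¹ * z ^ k * y = z ^ k := by
      have := (hzc y).zpow_right k
      calc y⁻¹ * z ^ k * y = y⁻¹ * (z ^ k * y) := by group
        _ = y⁻¹ * (y * z ^ k) := by rw [this.eq.symm]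
        _ = z ^ k := by group
    rw [h3] at h1
    have h4 : x ^ k * z ^ (-k) = ((y⁻¹ * x ^ k * y) * z ^ k) * z ^ (-k) := by rw [← h1]
    rw [h4]; group
  -- swap formula: y^j * x^k = x^k * z^(k*j) * y^j
  have swap : ∀ j k : ℤ, y ^ j * x ^ k = x ^ k * z ^ (k * j) * y ^ j := by
    intro j
    induction j using Int.induction_on with
    | zero => intro k; simp
    | succ i ih =>
        intro k
        have : y ^ (i + 1 : ℤ) * x ^ k = y ^ (i:ℤ) * (y * x ^ k * y⁻¹) * y := by
          rw [zpow_add, zpow_one]; group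
        rw [this, conj1 k]
        have h2 : y ^ (i:ℤ) * (x ^ k * z ^ k) = (y ^ (i:ℤ) * x ^ k) * z ^ k := by group
        rw [h2, ih k]
        have h3 : z ^ (k * i) * y ^ (i:ℤ) * z ^ k = z ^ (k * i) * z ^ k * y ^ (i:ℤ) := by
          rw [mul_assoc, ((hzc (y ^ (i:ℤ))).zpow_right k).eq, ← mul_assoc]
        calc x ^ k * z ^ (k * i) * y ^ (i:ℤ) * z ^ k * y
            = x ^ k * (z ^ (k * i) * y ^ (i:ℤ) * z ^ k) * y := by group
          _ = x ^ k * (z ^ (k * i) * z ^ k * y ^ (i:ℤ)) * y := by rw [h3]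
          _ = x ^ k * z ^ (k * (i + 1)) * y ^ (i + 1 : ℤ) := by
              rw [← zpow_add, show (k * (↑i + 1) : ℤ) = k * ↑i + k by ring]; group
    | pred i ih =>
        intro k
        have : y ^ (-i - 1 : ℤ) * x ^ k = y ^ (-i:ℤ) * (y⁻¹ * x ^ k * y) * y⁻¹ := by
          rw [show (-i - 1 : ℤ) = -i + -1 by ring, zpow_add]; group
        rw [this, conj1' k]
        have h2 : y ^ (-i:ℤ) * (x ^ k * z ^ (-k)) = (y ^ (-i:ℤ) * x ^ k) * z ^ (-k) := by group
        rw [h2, ih k]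
        have h3 : z ^ (k * -i) * y ^ (-i:ℤ) * z ^ (-k) = z ^ (k * -i) * z ^ (-k) * y ^ (-i:ℤ) := by
          rw [mul_assoc, ((hzc (y ^ (-i:ℤ))).zpow_right (-k)).eq, ← mul_assoc]
        calc x ^ k * z ^ (k * -i) * y ^ (-i:ℤ) * z ^ (-k) * y⁻¹
            = x ^ k * (z ^ (k * -i) * y ^ (-i:ℤ) * z ^ (-k)) * y⁻¹ := by group
          _ = x ^ k * (z ^ (k * -i) * z ^ (-k) * y ^ (-i:ℤ)) * y⁻¹ := by rw [h3]
          _ = x ^ k * z ^ (k * (-i - 1)) * y ^ (-i - 1 : ℤ) := by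
              rw [← zpow_add, show (k * (-↑i - 1) : ℤ) = k * -↑i + -k by ring]; group
  -- z as zpow of x
  have hzz : ∀ c : ℤ, z ^ c = x ^ ((t : ℤ) * c) := by
    intro c
    rw [hzdef, ← zpow_natCast x t, ← zpow_mul]
  -- multiplication formula
  have mulform : ∀ i j k l : ℤ,
      (x ^ i * y ^ j) * (x ^ k * y ^ l) = x ^ (i + k + t * k * j) * y ^ (j + l) := by
    intro i j k l
    calc (x ^ i * y ^ j) * (x ^ k * y ^ l) = x ^ i * (y ^ j * x ^ k) * y ^ l := by group
      _ = x ^ i * (x ^ k * z ^ (k * j) * y ^ j) * y ^ l := by rw [swap j k]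
      _ = (x ^ i * x ^ k * z ^ (k * j)) * (y ^ j * y ^ l) := by group
      _ = x ^ (i + k + t * k * j) * y ^ (j + l) := by
          rw [hzz, ← zpow_add, ← zpow_add, ← zpow_add]; ring_nf
  -- inverse formula
  have invform : ∀ i j : ℤ, (x ^ i * y ^ j)⁻¹ = x ^ (-i + t * i * j) * y ^ (-j) := by
    intro i j
    have : (x ^ i * y ^ j)⁻¹ = y ^ (-j) * x ^ (-i) := by
      rw [mul_inv_rev, ← zpow_neg, ← zpow_neg]
    rw [this, swap (-j) (-i), hzz, ← zpow_add]
    congr 2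
    ring
  -- normal form
  have normalform : ∀ g : D, ∃ i j : ℤ, g = x ^ i * y ^ j := by
    set S : Subgroup D :=
      { carrier := {g : D | ∃ i j : ℤ, g = x ^ i * y ^ j}
        one_mem' := ⟨0, 0, by simp⟩
        mul_mem' := by
          rintro a b ⟨i, j, rfl⟩ ⟨k, l, rfl⟩
          exact ⟨i + k + t * k * j, j + l, mulform i j k l⟩
        inv_mem' := by
          rintro a ⟨i, j, rfl⟩
          exact ⟨-i + t * i * j, -j, invform i j⟩ } with hS
    have hle : Subgroup.closure ({x, y} : Set D) ≤ S := by
      rw [Subgroup.closure_le]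
      intro g hg
      rcases hg with h | h
      · exact h ▸ ⟨1, 0, by simp⟩
      · simp at h; exact h ▸ ⟨0, 1, by simp⟩
    rw [hgen] at hle
    intro g
    exact hle (Subgroup.mem_top g)
  -- power formula
  have powform : ∀ (i j r : ℤ), ∃ e : ℤ, (x ^ i * y ^ j) ^ r = x ^ (i * r + t * e) * y ^ (j * r) := by
    intro i j r
    induction r using Int.induction_on with
    | zero => exact ⟨0, by simp⟩
    | succ r ih =>
        obtain ⟨e, he⟩ := ih
        refine ⟨e + (i * (j * r)), ?_⟩
        rw [zpow_add, zpow_one, he, mulform]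
        congr 1
        · congr 1; ring
        · ring
    | pred r ih =>
        obtain ⟨e, he⟩ := ih
        refine ⟨e + i * j + i * j * (r : ℤ) - (t : ℤ) * i * j ^ 2 * (r : ℤ), ?_⟩
        rw [show (-r - 1 : ℤ) = -r + -1 by ring, zpow_add, he, zpow_neg_one, invform, mulform]
        congr 1
        · congr 1; push_cast; ring
        · ring
  -- commutation criterion: if p ∣ k*j - i*l then the two elements commute
  have commcrit : ∀ i j k l : ℤ, (p : ℤ) ∣ (k * j - i * l) →
      Commute (x ^ i * y ^ j) (x ^ k * y ^ l) := by
    intro i j k l ⟨s, hs⟩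
    unfold Commute SemiconjBy
    rw [mulform, mulform]
    have hx0 : x ^ (i + k + t * k * j : ℤ) = x ^ (k + i + t * i * l : ℤ) := by
      have : (i + k + t * k * j : ℤ) = (k + i + t * i * l) + t * (k * j - i * l) := by ring
      rw [this, zpow_add]
      have : x ^ ((t : ℤ) * (k * j - i * l)) = 1 := by
        rw [hs, show ((t:ℤ) * ((p:ℤ) * s)) = ((p ^ m : ℕ) : ℤ) * s by
          rw [show p ^ m = t * p from by rw [ht, ← pow_succ]; congr 1; omega]
          push_cast
          ring]
        rw [zpow_mul, zpow_natCast, hxpm, one_zpow]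
      rw [this, mul_one]
    rw [hx0, add_comm j l]
  -- Part 1: non-abelian
  constructor
  · intro h
    have := h y x
    unfold Commute SemiconjBy at this
    have h1 : y * x * y⁻¹ = x := by rw [this]; group
    rw [hyxy] at h1
    have : z = 1 := by
      calc z = x⁻¹ * (x * z) := by group
        _ = x⁻¹ * x := by rw [h1]
        _ = 1 := by group
    exact hzne this
  -- Part 2: proper subgroups abelian
  · intro H hH a ha b hb
    by_contra hcomm
    apply hH
    obtain ⟨i, j, rfl⟩ := normalform a
    obtain ⟨k, l, rfl⟩ := normalform b
    -- p does not divide d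
    have hd : ¬ (p : ℤ) ∣ (k * j - i * l) := fun h => hcomm (commcrit i j k l h)
    set d : ℤ := k * j - i * l with hddef
    -- x ∈ H
    have hxH : x ∈ H := by
      obtain ⟨e1, he1⟩ := powform i j l
      obtain ⟨e2, he2⟩ := powform k l (-j)
      have hc1 : (x ^ i * y ^ j) ^ l * (x ^ k * y ^ l) ^ (-j) ∈ H :=
        H.mul_mem (H.zpow_mem ha l) (H.zpow_mem hb (-j))
      rw [he1, he2, mulform] at hc1
      have hy0 : (j * l + l * (-j) : ℤ) = 0 := by ring
      rw [hy0, zpow_zero, mul_one] at hc1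
      set u : ℤ := i * l + t * e1 + (k * -j + t * e2) + t * (k * -j + t * e2) * (j * l) with hu
      have hpu : ¬ (p : ℤ) ∣ u := by
        intro hdvd
        apply hd
        have hpt : (p : ℤ) ∣ (t : ℤ) := by
          rw [ht]; push_cast
          exact dvd_pow_self _ (by omega)
        have : (p:ℤ) ∣ (i * l - k * j) := by
          have : (i * l - k * j : ℤ) = u - ((t:ℤ) * e1 + (t:ℤ) * e2 + t * (k * -j + t * e2) * (j * l)) := by
            rw [hu]; ring
          rw [this]
          exact dvd_sub hdvd
            (dvd_add (dvd_add (hpt.mul_right _) (hpt.mul_right _))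
              ((hpt.mul_right _).mul_right _))
        have := (dvd_neg.2 this)
        rw [show -(i * l - k * j) = k * j - i * l by ring] at this
        exact this
      obtain ⟨c, hc⟩ := aux_pow_gen p m hp x hx u hpu
      rw [← hc]
      exact H.zpow_mem hc1 c
    -- y ∈ H
    have hyH : y ∈ H := by
      obtain ⟨e1, he1⟩ := powform i j (-k)
      obtain ⟨e2, he2⟩ := powform k l i
      have hc2 : (x ^ i * y ^ j) ^ (-k) * (x ^ k * y ^ l) ^ i ∈ H :=
        H.mul_mem (H.zpow_mem ha (-k)) (H.zpow_mem hb i)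
      rw [he1, he2, mulform] at hc2
      set w : ℤ := i * -k + t * e1 + (k * i + t * e2) + t * (k * i + t * e2) * (j * -k) with hw
      have hyv : y ^ (j * -k + l * i : ℤ) ∈ H := by
        have : y ^ (j * -k + l * i : ℤ) = (x ^ w)⁻¹ * (x ^ w * y ^ (j * -k + l * i : ℤ)) := by group
        rw [this]
        exact H.mul_mem (H.inv_mem (H.zpow_mem hxH w)) hc2
      have hpv : ¬ (p : ℤ) ∣ (j * -k + l * i) := by
        intro hdvd
        apply hd
        have := dvd_neg.2 hdvd
        rw [show -(j * -k + l * i) = k * j - i * l by ring] at this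
        exact this
      obtain ⟨c, hc⟩ := aux_pow_gen p n hp y hy (j * -k + l * i) hpv
      rw [← hc]
      exact H.zpow_mem hyv c
    rw [eq_top_iff, ← hgen, Subgroup.closure_le]
    intro g hg
    rcases hg with h | h
    · exact h ▸ hxH
    · simp at h; exact h ▸ hyH
end

section
/- Let p be an odd prime and D = ⟨x, y | x^(p^m) = y^(p^n) = 1, y x y⁻¹ = x^(1+p^(m-1))⟩ with m ≥ 2, n ≥ 1. Then the normalizer of ⟨y⟩ in D equals the centralizer of y in D. -/
/-- In the metacyclic minimal non-abelian group
`D = ⟨x,y | x^(p^m) = y^(p^n) = 1, yxy⁻¹ = x^(1+p^(m-1))⟩`, the normalizer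
of `⟨y⟩` equals the centralizer of `y`. -/
theorem normalizer_zpowers_y_eq_centralizer
    (p m n : ℕ) (hp : p.Prime) (hodd : Odd p)
    (hm : 2 ≤ m) (hn : 1 ≤ n)
    (D : Type) [Group D] [Fintype D] (x y : D)
    (hgen : Subgroup.closure ({x, y} : Set D) = ⊤)
    (hx : orderOf x = p ^ m) (hy : orderOf y = p ^ n)
    (hrel : y * x * y⁻¹ = x ^ (1 + p ^ (m - 1)))
    (hcard : Fintype.card D = p ^ (m + n)) :
    Subgroup.normalizer ((Subgroup.zpowers y : Subgroup D) : Set D) = Subgroup.centralizer {y} := by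
  classical
  set H := Subgroup.zpowers x with hH
  -- H is normal
  have hyN : y ∈ Subgroup.normalizer (H : Set D) := by
    apply Subgroup.mem_normalizer_fintype
    rintro g hg
    rcases Subgroup.mem_zpowers_iff.mp hg with ⟨k, rfl⟩
    have : y * x ^ k * y⁻¹ = (y * x * y⁻¹) ^ k := by
      have := map_zpow (MulAut.conj y) x k
      simpa [MulAut.conj_apply] using this.symm
    rw [this, hrel]
    exact Subgroup.zpow_mem _ (Subgroup.zpowers_le.mpr (Subgroup.pow_mem _ (Subgroup.mem_zpowers x) _) (Subgroup.mem_zpowers _)) k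
  have hxN : x ∈ Subgroup.normalizer (H : Set D) := Subgroup.le_normalizer (Subgroup.mem_zpowers x)
  have hNtop : Subgroup.normalizer (H : Set D) = ⊤ := by
    rw [eq_top_iff, ← hgen, Subgroup.closure_le]
    rintro z (rfl | rfl)
    · exact hxN
    · exact hyN
  haveI hHnormal : H.Normal := Subgroup.normalizer_eq_top_iff.mp hNtop
  set π := QuotientGroup.mk' H with hπ
  have hπx : π x = 1 := (QuotientGroup.eq_one_iff x).mpr (Subgroup.mem_zpowers x)
  have htopQ : Subgroup.zpowers (π y) = ⊤ := by
    rw [eq_top_iff]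
    have hmap : Subgroup.map π ⊤ = ⊤ :=
      Subgroup.map_top_of_surjective π (QuotientGroup.mk'_surjective H)
    rw [← hmap, ← hgen, MonoidHom.map_closure, Subgroup.closure_le]
    rintro z ⟨w, (rfl | rfl), rfl⟩
    · rw [hπx]; exact Subgroup.one_mem _
    · exact Subgroup.mem_zpowers _
  -- card facts
  have hpm : (0:ℕ) < p ^ m := pow_pos hp.pos m
  have hindex : H.index = p ^ n := by
    have h1 : Nat.card H * H.index = Nat.card D := Subgroup.card_mul_index H
    rw [Nat.card_zpowers, hx, Nat.card_eq_fintype_card, hcard, pow_add] at h1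
    exact Nat.eq_of_mul_eq_mul_left hpm h1
  have hordπy : orderOf (π y) = p ^ n := by
    have : orderOf (π y) = Nat.card (D ⧸ H) := by
      rw [← Nat.card_zpowers, htopQ, Subgroup.card_top]
    rw [this, ← Subgroup.index, hindex]
  -- commutators with y lie in H
  have hcomm : ∀ g : D, g * y * g⁻¹ * y⁻¹ ∈ H := by
    intro g
    have hg : π g ∈ Subgroup.zpowers (π y) := htopQ ▸ Subgroup.mem_top _
    rcases Subgroup.mem_zpowers_iff.mp hg with ⟨k, hk⟩
    have hc : Commute (π g) (π y) := by
      rw [← hk]; exact (Commute.refl (π y)).zpow_left k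
    rw [← QuotientGroup.eq_one_iff]
    show π (g * y * g⁻¹ * y⁻¹) = 1
    have : π (g * y * g⁻¹ * y⁻¹) = π g * π y * (π g)⁻¹ * (π y)⁻¹ := by
      simp [map_mul]
    rw [this, hc.eq]
    group
  -- intersection trivial
  have hinter : ∀ c : D, c ∈ H → c ∈ Subgroup.zpowers y → c = 1 := by
    intro c hcH hcK
    rcases Subgroup.mem_zpowers_iff.mp hcK with ⟨k, rfl⟩
    have h1 : (π y) ^ k = 1 := by
      rw [← map_zpow]
      exact (QuotientGroup.eq_one_iff _).mpr hcH
    have h2 : (orderOf (π y) : ℤ) ∣ k := orderOf_dvd_iff_zpow_eq_one.mpr h1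
    rw [hordπy, ← hy] at h2
    exact orderOf_dvd_iff_zpow_eq_one.mp h2
  -- final
  apply le_antisymm
  · intro g hg
    have hgy : g * y * g⁻¹ ∈ Subgroup.zpowers y :=
      (Subgroup.mem_normalizer_iff.mp hg y).mp (Subgroup.mem_zpowers y)
    have hc : g * y * g⁻¹ * y⁻¹ = 1 :=
      hinter _ (hcomm g) (Subgroup.mul_mem _ hgy (Subgroup.inv_mem _ (Subgroup.mem_zpowers y)))
    rw [Subgroup.mem_centralizer_iff]
    intro h hh
    rw [Set.mem_singleton_iff] at hh
    subst hh
    rw [mul_inv_eq_one] at hc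
    exact (mul_inv_eq_iff_eq_mul.mp hc).symm
  · intro g hg
    have hcy : y * g = g * y := Subgroup.mem_centralizer_iff.mp hg y rfl
    have hcg : Commute g y := (Commute.symm hcy)
    rw [Subgroup.mem_normalizer_iff]
    intro h
    simp only [Subgroup.mem_zpowers_iff]
    constructor
    · rintro ⟨k, rfl⟩
      refine ⟨k, ?_⟩
      rw [(hcg.zpow_right k).eq]
      group
    · rintro ⟨k, hk⟩
      refine ⟨k, ?_⟩
      have hh : h = g⁻¹ * y ^ k * g := by rw [hk]; group
      rw [hh, (hcg.zpow_right k).inv_left.eq]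
      group
end

section
/- Let p be an odd prime and D = ⟨x, y | x^(p^m) = y^(p^n) = 1, y x y⁻¹ = x^(1+p^(m-1))⟩ with m ≥ 2, n ≥ 1. Then the centralizer of y in D equals ⟨x^p, y⟩ and has index p in D. -/
/-- In the metacyclic minimal non-abelian group
`D = ⟨x,y | x^(p^m) = y^(p^n) = 1, yxy⁻¹ = x^(1+p^(m-1))⟩`, the centralizer of `y`
equals `⟨x^p, y⟩` and has index `p` in `D`. -/
theorem centralizer_y_of_metacyclic_minimal_nonabelian
    (p m n : ℕ) (hp : p.Prime) (hodd : Odd p)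
    (hm : 2 ≤ m) (hn : 1 ≤ n)
    (D : Type) [Group D] [Fintype D] (x y : D)
    (hgen : Subgroup.closure ({x, y} : Set D) = ⊤)
    (hx : orderOf x = p ^ m) (hy : orderOf y = p ^ n)
    (hrel : y * x * y⁻¹ = x ^ (1 + p ^ (m - 1)))
    (hcard : Fintype.card D = p ^ (m + n)) :
    Subgroup.centralizer {y} = Subgroup.closure ({x ^ p, y} : Set D) ∧
    (Subgroup.centralizer ({y} : Set D)).index = p := by
  have hp1 : 1 < p := hp.one_lt
  set s := p ^ (m - 1) with hs
  -- conjugation of powers of x by y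
  have key : ∀ k : ℕ, y * x ^ k * y⁻¹ = x ^ (k * (1 + s)) := by
    intro k
    have h1 : y * x ^ k * y⁻¹ = (y * x * y⁻¹) ^ k := by
      simpa [MulAut.conj_apply] using (map_pow (MulAut.conj y) x k).symm
    rw [h1, hrel, ← pow_mul, mul_comm]
  -- p * s = p ^ m
  have hps : p * s = p ^ m := by
    rw [hs, ← pow_succ']
    congr 1
    omega
  have hxs_ne : x ^ s ≠ 1 := by
    intro h
    rw [← orderOf_dvd_iff_pow_eq_one, hx, hs] at h
    have := Nat.le_of_dvd (by positivity) h
    have := Nat.pow_le_pow_iff_right hp1 |>.mp this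
    omega
  -- x^p commutes with y
  have hxp_comm : y * x ^ p = x ^ p * y := by
    have h := key p
    rw [mul_add, mul_one, hps, pow_add, ← hx, pow_orderOf_eq_one, mul_one] at h
    calc y * x ^ p = y * x ^ p * y⁻¹ * y := by group
    _ = x ^ p * y := by rw [h]
  -- x does not commute with y
  have hx_notin : ∀ K : Subgroup D, K ≤ Subgroup.centralizer {y} → x ∉ K := by
    intro K hK hxK
    have := hK hxK
    rw [Subgroup.mem_centralizer_iff] at this
    have hcom : y * x = x * y := this y rfl
    have : y * x * y⁻¹ = x := by rw [hcom]; group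
    rw [hrel, pow_add, pow_one] at this
    exact hxs_ne (by
      have : x * x ^ s = x * 1 := by rw [mul_one]; exact this
      exact mul_left_cancel this)
  set H := Subgroup.closure ({x ^ p, y} : Set D) with hH
  have hxpH : x ^ p ∈ H := Subgroup.subset_closure (Set.mem_insert _ _)
  have hyH : y ∈ H := Subgroup.subset_closure (Set.mem_insert_of_mem _ rfl)
  have hxsH : x ^ s ∈ H := by
    have : s = p * p ^ (m - 2) := by rw [hs, ← pow_succ']; congr 1; omega
    rw [this, pow_mul]
    exact pow_mem hxpH _
  -- H ≤ centralizer y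
  have hHC : H ≤ Subgroup.centralizer {y} := by
    rw [hH]
    apply (Subgroup.closure_le _).mpr
    rintro z (rfl | rfl)
    · exact Subgroup.mem_centralizer_iff.mpr (by rintro g rfl; exact hxp_comm)
    · exact Subgroup.mem_centralizer_iff.mpr (by rintro g rfl; rfl)
  -- conjugation relations
  have hsplit : y * x = x ^ (1 + s) * y := by
    calc y * x = y * x * y⁻¹ * y := by group
    _ = x ^ (1 + s) * y := by rw [hrel]
  have c1 : x⁻¹ * y * x = x ^ s * y := by
    have : y * x = x * (x ^ s * y) := by
      rw [hsplit, pow_add, pow_one, mul_assoc]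
    calc x⁻¹ * y * x = x⁻¹ * (y * x) := by group
    _ = x ^ s * y := by rw [this]; group
  have c2 : x * y * x⁻¹ = (x ^ s)⁻¹ * y := by
    have : x * y = (x ^ s)⁻¹ * y * x := by
      rw [mul_assoc, hsplit, add_comm, pow_add, ← mul_assoc, ← mul_assoc,
        inv_mul_cancel, one_mul, pow_one]
    rw [this]; group
  -- H is normal
  have hmapx : ∀ g ∈ H, x * g * x⁻¹ ∈ H := by
    intro g hg
    have : H.map (MulAut.conj x).toMonoidHom ≤ H := by
      rw [hH, MonoidHom.map_closure]
      apply (Subgroup.closure_le _).mpr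
      rintro z ⟨w, (rfl | rfl), rfl⟩
      · simp only [MulEquiv.coe_toMonoidHom, MulAut.conj_apply]
        have : x * x ^ p * x⁻¹ = x ^ p := by
          rw [← pow_succ', pow_succ]; group
        rw [this]; exact hxpH
      · simp only [MulEquiv.coe_toMonoidHom, MulAut.conj_apply]
        rw [c2]; exact mul_mem (inv_mem hxsH) hyH
    exact this ⟨g, hg, by simp [MulAut.conj_apply]⟩
  have hmapxi : ∀ g ∈ H, x⁻¹ * g * x ∈ H := by
    intro g hg
    have : H.map (MulAut.conj x⁻¹).toMonoidHom ≤ H := by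
      rw [hH, MonoidHom.map_closure]
      apply (Subgroup.closure_le _).mpr
      rintro z ⟨w, (rfl | rfl), rfl⟩
      · simp only [MulEquiv.coe_toMonoidHom, MulAut.conj_apply]
        have : x⁻¹ * x ^ p * x⁻¹⁻¹ = x ^ p := by
          rw [inv_inv, (((Commute.refl x).pow_right p).inv_left).eq]; group
        rw [this]; exact hxpH
      · simp only [MulEquiv.coe_toMonoidHom, MulAut.conj_apply]
        rw [inv_inv, c1]; exact mul_mem hxsH hyH
    exact this ⟨g, hg, by simp [MulAut.conj_apply]⟩
  have hxnorm : x ∈ Subgroup.normalizer (H : Set D) := by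
    rw [Subgroup.mem_normalizer_iff]
    intro h
    constructor
    · exact hmapx h
    · intro hh
      have := hmapxi _ hh
      simpa [mul_assoc] using this
  have hnormal : H.Normal := by
    rw [← Subgroup.normalizer_eq_top_iff]
    rw [eq_top_iff, ← hgen]
    apply (Subgroup.closure_le _).mpr
    rintro z (rfl | rfl)
    · exact hxnorm
    · exact Subgroup.le_normalizer hyH
  -- quotient is cyclic of order dividing p
  have hHdvd : H.index ∣ p := by
    haveI := hnormal
    set f := QuotientGroup.mk' H with hf
    have hfy : f y = 1 := (QuotientGroup.eq_one_iff _).mpr hyH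
    have hfxp : (f x) ^ p = 1 := by
      rw [← map_pow]; exact (QuotientGroup.eq_one_iff _).mpr hxpH
    have htop : Subgroup.zpowers (f x) = ⊤ := by
      rw [eq_top_iff]
      have : (⊤ : Subgroup (D ⧸ H)) = Subgroup.map f ⊤ := by
        rw [← MonoidHom.range_eq_map]
        exact (MonoidHom.range_eq_top.mpr (QuotientGroup.mk'_surjective H)).symm
      rw [this, ← hgen, MonoidHom.map_closure]
      apply (Subgroup.closure_le _).mpr
      rintro z ⟨w, (rfl | rfl), rfl⟩
      · exact Subgroup.mem_zpowers _
      · rw [hfy]; exact one_mem _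
    have : H.index = orderOf (f x) := by
      rw [Subgroup.index_eq_card, ← Nat.card_zpowers, htop]
      exact (Nat.card_congr Subgroup.topEquiv.toEquiv).symm
    rw [this]
    exact orderOf_dvd_of_pow_eq_one hfxp
  have hHne : H.index ≠ 1 := by
    rw [Ne, Subgroup.index_eq_one]
    intro h
    exact hx_notin H hHC (h ▸ Subgroup.mem_top x)
  have hHidx : H.index = p := ((hp.eq_one_or_self_of_dvd _ hHdvd).resolve_left hHne)
  -- centralizer index
  have hCdvd : (Subgroup.centralizer ({y} : Set D)).index ∣ p :=
    hHidx ▸ Subgroup.index_dvd_of_le hHC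
  have hCne : (Subgroup.centralizer ({y} : Set D)).index ≠ 1 := by
    rw [Ne, Subgroup.index_eq_one]
    intro h
    exact hx_notin _ le_rfl (h ▸ Subgroup.mem_top x)
  have hCidx : (Subgroup.centralizer ({y} : Set D)).index = p :=
    (hp.eq_one_or_self_of_dvd _ hCdvd).resolve_left hCne
  -- equality of subgroups
  have hcards : Nat.card H = Nat.card (Subgroup.centralizer ({y} : Set D)) := by
    have h1 := Subgroup.index_mul_card (G := D) (H := H)
    have h2 := Subgroup.index_mul_card (G := D) (H := Subgroup.centralizer ({y} : Set D))
    rw [hHidx] at h1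
    rw [hCidx] at h2
    have := h1.trans h2.symm
    exact Nat.eq_of_mul_eq_mul_left hp.pos this
  refine ⟨?_, hCidx⟩
  exact (Subgroup.eq_of_le_of_card_ge hHC hcards.ge).symm
end

section
/- Let p be an odd prime, m ≥ 2, n ≥ 1, and let e be a positive divisor of p - 1. Suppose real numbers k₀, k₁ satisfy: k₀ ≤ ((p^(m-1) - 1)/e + e - 1)·p^n, k₀ + k₁ ≥ ((p^(m-1) + p^(m-2) - p^(m-3) - 1)/e + e)·p^n, and k₀ + p²·k₁ ≤ ((p^m - p)/e + p·e)·p^n. Then ((p^m - 1)/e + p² + e - 1)·p^n ≤ ((p^m - 1)/e + p²)·p^n, a contradiction (i.e., no such k₀, k₁ exist). -/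
/-- Arithmetic core of the Alperin-McKay theorem for metacyclic minimal non-abelian
defect groups: the three inequalities on `k₀` and `k₁` are incompatible. -/
theorem alperin_mckay_arithmetic_contradiction
    (p m n e : ℕ) (hp : p.Prime) (hodd : Odd p)
    (hm : 2 ≤ m) (hn : 1 ≤ n) (he : 0 < e) (hdvd : e ∣ p - 1)
    (k₀ k₁ : ℚ)
    (h1 : k₀ ≤ (((p : ℚ) ^ ((m : ℤ) - 1) - 1) / e + e - 1) * (p : ℚ) ^ (n : ℤ))
    (h2 : (((p : ℚ) ^ ((m : ℤ) - 1) + (p : ℚ) ^ ((m : ℤ) - 2) - (p : ℚ) ^ ((m : ℤ) - 3) - 1) / e + e)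
            * (p : ℚ) ^ (n : ℤ) ≤ k₀ + k₁)
    (h3 : k₀ + (p : ℚ) ^ 2 * k₁ ≤ (((p : ℚ) ^ (m : ℤ) - p) / e + p * e) * (p : ℚ) ^ (n : ℤ)) :
    False := by
  set P : ℚ := (p : ℚ) with hP
  have hp3 : 3 ≤ p := by
    rcases hp.two_le.lt_or_eq with h | h
    · omega
    · exfalso; rw [← h] at hodd; exact (Nat.not_odd_iff_even.mpr even_two) hodd
  have hP3 : (3:ℚ) ≤ P := by rw [hP]; exact_mod_cast hp3
  have hP0 : P ≠ 0 := by positivity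
  have hE0 : (0:ℚ) < e := by exact_mod_cast he
  have heP : (e:ℚ) ≤ P - 1 := by
    have h' : e ≤ p - 1 := Nat.le_of_dvd (by omega) hdvd
    have h'' : (e:ℚ) ≤ ((p - 1 : ℕ) : ℚ) := by exact_mod_cast h'
    rwa [Nat.cast_sub (by omega)] at h''
  set A : ℚ := P ^ ((m:ℤ) - 3) with hA
  have hA0 : 0 < A := by positivity
  set Q : ℚ := P ^ ((n:ℤ)) with hQ
  have hQ0 : 0 < Q := by positivity
  have e1 : P ^ ((m:ℤ) - 1) = P ^ 2 * A := by
    rw [show (m:ℤ) - 1 = ((2:ℕ):ℤ) + ((m:ℤ) - 3) by push_cast; ring, zpow_add₀ hP0,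
      zpow_natCast]
  have e2 : P ^ ((m:ℤ) - 2) = P * A := by
    rw [show (m:ℤ) - 2 = (1:ℤ) + ((m:ℤ) - 3) by ring, zpow_add₀ hP0, zpow_one]
  have e3 : P ^ ((m:ℤ)) = P ^ 3 * A := by
    rw [show (m:ℤ) = ((3:ℕ):ℤ) + ((m:ℤ) - 3) by push_cast; ring, zpow_add₀ hP0,
      zpow_natCast]
  rw [e1] at h1
  rw [e1, e2] at h2
  rw [e3] at h3
  have h1' : (e:ℚ) * k₀ ≤ (P ^ 2 * A - 1 + (e:ℚ)^2 - e) * Q := by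
    have h := mul_le_mul_of_nonneg_left h1 hE0.le
    have eq : (e:ℚ) * (((P ^ 2 * A - 1) / e + e - 1) * Q)
        = (P ^ 2 * A - 1 + (e:ℚ)^2 - e) * Q := by
      field_simp
    rw [← eq]; exact h
  have h2' : (P ^ 2 * A + P * A - A - 1 + (e:ℚ)^2) * Q ≤ (e:ℚ) * (k₀ + k₁) := by
    have h := mul_le_mul_of_nonneg_left h2 hE0.le
    have eq : (e:ℚ) * (((P ^ 2 * A + P * A - A - 1) / e + e) * Q)
        = (P ^ 2 * A + P * A - A - 1 + (e:ℚ)^2) * Q := by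
      field_simp
    rw [← eq]; exact h
  have h3' : (e:ℚ) * (k₀ + P ^ 2 * k₁) ≤ (P ^ 3 * A - P + P * (e:ℚ)^2) * Q := by
    have h := mul_le_mul_of_nonneg_left h3 hE0.le
    have eq : (e:ℚ) * (((P ^ 3 * A - P) / e + P * e) * Q)
        = (P ^ 3 * A - P + P * (e:ℚ)^2) * Q := by
      field_simp
    rw [← eq]; exact h
  have hpos : 0 < ((P - 1) * (1 + (e:ℚ) * (P + 1 - e))) * Q := by
    have hb : 0 < P - 1 := by linarith
    have hc : 0 < P + 1 - (e:ℚ) := by linarith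
    have hd : 0 < 1 + (e:ℚ) * (P + 1 - e) := by positivity
    positivity
  have m2 := mul_le_mul_of_nonneg_left h2' (by positivity : (0:ℚ) ≤ P ^ 2)
  have m1 := mul_le_mul_of_nonneg_left h1' (by nlinarith : (0:ℚ) ≤ P ^ 2 - 1)
  nlinarith [m1, m2, h3', hpos]
end
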